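/- arXiv:quant-ph/0403108 — 3 statements merged into one kernel-verified Lean document; each statement's English description precedes it below -/
import Mathlib

section
/- Let ρ be a probability measure on ℝ. If for every nonempty open set U ⊆ ℝ one has sup_{x ∈ ℝ} ρ(x + U) = 1, then the support of ρ consists of exactly one point, i.e. ρ = δ_t for some t ∈ ℝ. -/
open MeasureTheory Filter Set
open scoped ENNReal NNReal Topology

/-- If a probability measure `ρ` on `ℝ` satisfies `sup_x ρ(x + U) = 1` for every
nonempty open set `U`, then `ρ` is a Dirac measure at some point. -/
theorem stmt_0 (ρ : Measure ℝ) [IsProbabilityMeasure ρ]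
    (h : ∀ U : Set ℝ, IsOpen U → U.Nonempty → (⨆ x : ℝ, ρ {y | y - x ∈ U}) = 1) :
    ∃ t : ℝ, ρ = Measure.dirac t := by
  set a : ℕ → ℝ := fun n => 1 / (n + 1) with ha
  have hapos : ∀ n, 0 < a n := fun n => by positivity
  have hamono : ∀ {n m : ℕ}, n ≤ m → a m ≤ a n := by
    intro n m hnm
    apply one_div_le_one_div_of_le (by positivity)
    have : (n:ℝ) ≤ m := Nat.cast_le.mpr hnm
    linarith
  -- choose points whose small neighborhoods carry almost all the mass
  have key : ∀ n : ℕ, ∃ x : ℝ,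
      1 - ((n : ℝ≥0∞) + 2)⁻¹ < ρ (Ioo (x - a n) (x + a n)) := by
    intro n
    have hU := h (Ioo (-(a n)) (a n)) isOpen_Ioo
      ⟨0, by simp [hapos n, neg_lt_zero.mpr (hapos n)]⟩
    have hlt : 1 - ((n : ℝ≥0∞) + 2)⁻¹ < ⨆ x : ℝ, ρ {y | y - x ∈ Ioo (-(a n)) (a n)} := by
      rw [hU]
      exact ENNReal.sub_lt_self ENNReal.one_ne_top one_ne_zero
        (ENNReal.inv_ne_zero.mpr (by simp))
    obtain ⟨x, hx⟩ := lt_iSup_iff.mp hlt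
    refine ⟨x, ?_⟩
    have hset : {y : ℝ | y - x ∈ Ioo (-(a n)) (a n)} = Ioo (x - a n) (x + a n) := by
      ext y
      simp only [mem_setOf_eq, mem_Ioo]
      constructor <;> rintro ⟨h1, h2⟩ <;> constructor <;> linarith
    rwa [hset] at hx
  choose x hx using key
  -- each set has measure > 1/2
  have hhalf : ∀ n, (2⁻¹ : ℝ≥0∞) < ρ (Ioo (x n - a n) (x n + a n)) := by
    intro n
    refine lt_of_le_of_lt ?_ (hx n)
    have h1 : ((n : ℝ≥0∞) + 2)⁻¹ ≤ 2⁻¹ :=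
      ENNReal.inv_le_inv.mpr (le_add_self)
    calc (2⁻¹ : ℝ≥0∞) = 1 - 2⁻¹ := by
          rw [← ENNReal.inv_two_add_inv_two, ENNReal.add_sub_cancel_right (by simp)]
      _ ≤ 1 - ((n : ℝ≥0∞) + 2)⁻¹ := tsub_le_tsub_left h1 1
  -- the intervals pairwise intersect
  have hinter : ∀ n m : ℕ, dist (x n) (x m) < a n + a m := by
    intro n m
    by_contra hcon
    push_neg at hcon
    have hdisj : Disjoint (Ioo (x n - a n) (x n + a n)) (Ioo (x m - a m) (x m + a m)) := by
      rw [Set.disjoint_left]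
      intro y hy1 hy2
      rw [mem_Ioo] at hy1 hy2
      rw [Real.dist_eq] at hcon
      rcases abs_cases (x n - x m) with ⟨heq, _⟩ | ⟨heq, _⟩ <;> rw [heq] at hcon <;>
        linarith [hy1.1, hy1.2, hy2.1, hy2.2]
    have := measure_union (μ := ρ) hdisj measurableSet_Ioo
    have hle : ρ (Ioo (x n - a n) (x n + a n) ∪ Ioo (x m - a m) (x m + a m)) ≤ 1 :=
      prob_le_one
    rw [this] at hle
    have : (1 : ℝ≥0∞) < ρ (Ioo (x n - a n) (x n + a n)) + ρ (Ioo (x m - a m) (x m + a m)) := by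
      calc (1 : ℝ≥0∞) = 2⁻¹ + 2⁻¹ := ENNReal.inv_two_add_inv_two.symm
        _ < _ := ENNReal.add_lt_add (hhalf n) (hhalf m)
    exact absurd hle (not_le.mpr this)
  -- the sequence is Cauchy
  have hcauchy : CauchySeq x := by
    apply cauchySeq_of_le_tendsto_0 (fun N => 2 * a N)
    · intro n m N hn hm
      calc dist (x n) (x m) ≤ a n + a m := le_of_lt (hinter n m)
        _ ≤ a N + a N := add_le_add (hamono hn) (hamono hm)
        _ = 2 * a N := by ring
    · simpa [ha, one_div] using (tendsto_one_div_add_atTop_nhds_zero_nat :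
          Tendsto (fun n : ℕ => 1 / ((n : ℝ) + 1)) atTop (𝓝 0)).const_mul 2
  obtain ⟨t, ht⟩ := cauchySeq_tendsto_of_complete hcauchy
  -- distance from x n to t is at most a n
  have hdist : ∀ n, dist (x n) t ≤ a n := by
    intro n
    have h1 : Tendsto (fun m => dist (x n) (x m)) atTop (𝓝 (dist (x n) t)) :=
      (tendsto_const_nhds.dist ht)
    have h2 : Tendsto (fun m => a n + a m) atTop (𝓝 (a n + 0)) :=
      tendsto_const_nhds.add tendsto_one_div_add_atTop_nhds_zero_nat
    rw [add_zero] at h2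
    exact le_of_tendsto_of_tendsto' h1 h2 (fun m => le_of_lt (hinter n m))
  -- the nested closed intervals around t
  set s : ℕ → Set ℝ := fun n => Icc (t - 2 * a n) (t + 2 * a n) with hs
  have hsub : ∀ n, Ioo (x n - a n) (x n + a n) ⊆ s n := by
    intro n y hy
    rw [mem_Ioo] at hy
    have := hdist n
    rw [Real.dist_eq] at this
    rcases abs_le.mp this with ⟨h1, h2⟩
    exact ⟨by linarith [hy.1], by linarith [hy.2]⟩
  have hanti : Antitone s := by
    intro n m hnm
    exact Icc_subset_Icc (by linarith [hamono hnm]) (by linarith [hamono hnm])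
  have hInt : ⋂ n, s n = {t} := by
    ext y
    simp only [mem_iInter, mem_singleton_iff, hs, mem_Icc]
    constructor
    · intro hy
      have habs : ∀ n, |y - t| ≤ 2 * a n := by
        intro n
        rcases hy n with ⟨h1, h2⟩
        rw [abs_le]; constructor <;> linarith
      have h0 : |y - t| ≤ 0 := by
        have g : Tendsto (fun n : ℕ => 2 * a n) atTop (𝓝 0) := by
          simpa [ha, one_div] using (tendsto_one_div_add_atTop_nhds_zero_nat :
          Tendsto (fun n : ℕ => 1 / ((n : ℝ) + 1)) atTop (𝓝 0)).const_mul 2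
        exact le_of_tendsto_of_tendsto' (tendsto_const_nhds (x := |y - t|)) g habs
      have := abs_nonneg (y - t)
      have : |y - t| = 0 := le_antisymm h0 this
      linarith [abs_eq_zero.mp this, sub_eq_zero.mp (abs_eq_zero.mp this)]
    · rintro rfl
      intro n
      constructor <;> linarith [le_of_lt (hapos n)]
  -- measure of {t} is 1
  have hmeas : Tendsto (ρ ∘ s) atTop (𝓝 (ρ {t})) := by
    rw [← hInt]
    exact tendsto_measure_iInter_atTop
      (fun n => measurableSet_Icc.nullMeasurableSet) hanti ⟨0, measure_ne_top ρ _⟩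
  have hlower : ∀ n : ℕ, 1 - ((n : ℝ≥0∞) + 2)⁻¹ ≤ (ρ ∘ s) n := fun n =>
    le_trans (le_of_lt (hx n)) (measure_mono (hsub n))
  have htend : Tendsto (fun n : ℕ => 1 - ((n : ℝ≥0∞) + 2)⁻¹) atTop (𝓝 1) := by
    have h1 : Tendsto (fun n : ℕ => ((n : ℝ≥0∞) + 2)⁻¹) atTop (𝓝 0) := by
      have := ENNReal.tendsto_inv_nat_nhds_zero.comp (tendsto_add_atTop_nat 2)
      convert this using 2 with n
      simp only [Function.comp_apply]
      push_cast
      ring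
    have := ENNReal.Tendsto.sub (tendsto_const_nhds (x := (1 : ℝ≥0∞))) h1
      (Or.inl ENNReal.one_ne_top)
    simpa using this
  have h1le : (1 : ℝ≥0∞) ≤ ρ {t} := le_of_tendsto_of_tendsto' htend hmeas hlower
  have hone : ρ {t} = 1 := le_antisymm prob_le_one h1le
  -- conclude
  refine ⟨t, ?_⟩
  ext u hu
  rw [Measure.dirac_apply' _ hu]
  by_cases htu : t ∈ u
  · rw [Set.indicator_of_mem htu]
    refine le_antisymm prob_le_one ?_
    calc (1 : ℝ≥0∞) = ρ {t} := hone.symm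
      _ ≤ ρ u := measure_mono (singleton_subset_iff.mpr htu)
  · rw [Set.indicator_of_notMem htu]
    have hsubc : u ⊆ {t}ᶜ := fun y hy => by
      simp only [mem_compl_iff, mem_singleton_iff]
      rintro rfl; exact htu hy
    have : ρ {t}ᶜ = 0 := by
      rw [measure_compl (measurableSet_singleton t) (measure_ne_top ρ _), hone,
        measure_univ, tsub_self]
    exact le_antisymm ((measure_mono hsubc).trans_eq this) zero_le
end

section
/- If ρ is a probability measure on ℝ whose support contains two distinct points x₁ ≠ x₂, then setting U = {x : |x| < |x₁ - x₂|/4}, there exists m > 0 such that for all x ∈ ℝ, ρ(x + U) ≤ 1 - m. -/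
open MeasureTheory

/-- If the support of a probability measure `ρ` on `ℝ` contains two distinct points
`x₁ ≠ x₂`, then with `U = {x : |x| < |x₁ - x₂|/4}` there is `m > 0` such that
`ρ(x + U) ≤ 1 - m` for every `x`. -/
theorem stmt_1 (ρ : Measure ℝ) [IsProbabilityMeasure ρ] (x₁ x₂ : ℝ) (hne : x₁ ≠ x₂)
    (h₁ : ∀ U : Set ℝ, IsOpen U → x₁ ∈ U → 0 < ρ U)
    (h₂ : ∀ U : Set ℝ, IsOpen U → x₂ ∈ U → 0 < ρ U) :
    ∃ m : ENNReal, 0 < m ∧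
      ∀ x : ℝ, ρ {y | y - x ∈ {z : ℝ | |z| < |x₁ - x₂| / 4}} ≤ 1 - m := by
  set r : ℝ := |x₁ - x₂| / 4 with hr
  have hrpos : 0 < r := by
    have : 0 < |x₁ - x₂| := abs_pos.2 (sub_ne_zero.2 hne)
    positivity
  have hb₁ : 0 < ρ (Metric.ball x₁ r) := h₁ _ Metric.isOpen_ball (Metric.mem_ball_self hrpos)
  have hb₂ : 0 < ρ (Metric.ball x₂ r) := h₂ _ Metric.isOpen_ball (Metric.mem_ball_self hrpos)
  refine ⟨min (ρ (Metric.ball x₁ r)) (ρ (Metric.ball x₂ r)), lt_min hb₁ hb₂, fun x => ?_⟩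
  have hset : {y : ℝ | y - x ∈ {z : ℝ | |z| < r}} = Metric.ball x r := by
    ext y
    simp [Metric.mem_ball, Real.dist_eq]
  rw [hset]
  -- ball x r is disjoint from ball x₁ r or ball x₂ r
  have key : ∃ i : ℝ, (i = x₁ ∨ i = x₂) ∧ Disjoint (Metric.ball x r) (Metric.ball i r) := by
    by_contra h
    push_neg at h
    obtain ⟨y₁, hy₁, hy₁'⟩ := Set.not_disjoint_iff.1 (h x₁ (Or.inl rfl))
    obtain ⟨y₂, hy₂, hy₂'⟩ := Set.not_disjoint_iff.1 (h x₂ (Or.inr rfl))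
    simp only [Metric.mem_ball, Real.dist_eq] at hy₁ hy₁' hy₂ hy₂'
    have h4 : |x₁ - x₂| < 4 * r := by
      obtain ⟨a1, a2⟩ := abs_sub_lt_iff.1 hy₁
      obtain ⟨b1, b2⟩ := abs_sub_lt_iff.1 hy₁'
      obtain ⟨c1, c2⟩ := abs_sub_lt_iff.1 hy₂
      obtain ⟨d1, d2⟩ := abs_sub_lt_iff.1 hy₂'
      rw [abs_sub_lt_iff]
      constructor <;> linarith
    rw [hr] at h4
    linarith
  obtain ⟨i, hi, hdisj⟩ := key
  have hsub : Metric.ball x r ⊆ (Metric.ball i r)ᶜ :=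
    Set.subset_compl_iff_disjoint_right.2 hdisj
  calc ρ (Metric.ball x r) ≤ ρ ((Metric.ball i r)ᶜ) := measure_mono hsub
    _ = 1 - ρ (Metric.ball i r) := by
        rw [measure_compl Metric.isOpen_ball.measurableSet (measure_ne_top ρ _),
          measure_univ]
    _ ≤ 1 - min (ρ (Metric.ball x₁ r)) (ρ (Metric.ball x₂ r)) := by
        apply tsub_le_tsub_left
        rcases hi with rfl | rfl
        · exact min_le_left _ _
        · exact min_le_right _ _
end

section
/- Let 0 ≤ a < b and define h₁ = (χ_{[a,b]} − χ_{[−b,−a]})/√(2(b−a)) and h₂ = (χ_{[a,b]} + χ_{[−b,−a]})/√(2(b−a)). Then h₁ and h₂ are unit vectors in L²(ℝ), and the functions h₁ ∗ h₁* and h₂ ∗ h₂* agree on the complement of [2a,2b] ∪ [−2b,−2a] but differ at some point of [2a,2b]. -/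
open MeasureTheory

/-- Convolution of two complex functions on `ℝ`. -/
noncomputable def cconv (f g : ℝ → ℂ) (x : ℝ) : ℂ := ∫ y : ℝ, f y * g (x - y)

/-- Complex indicator function of a set. -/
noncomputable def cchi (S : Set ℝ) : ℝ → ℂ := Set.indicator S fun _ => (1 : ℂ)

/-- The adjoint `h*(ξ) = conj (h(-ξ))`. -/
noncomputable def cstar (h : ℝ → ℂ) : ℝ → ℂ := fun ξ => starRingEnd ℂ (h (-ξ))

open Set Filter

lemma cchi_conj (S : Set ℝ) (t : ℝ) : (starRingEnd ℂ) (cchi S t) = cchi S t := by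
  by_cases h : t ∈ S <;> simp [cchi, h]

lemma cchi_mem {S : Set ℝ} {t : ℝ} (h : t ∈ S) : cchi S t = 1 := by simp [cchi, h]

lemma cchi_not_mem {S : Set ℝ} {t : ℝ} (h : t ∉ S) : cchi S t = 0 := by simp [cchi, h]

/-- The L² norm computation, parametric in the sign `ε = ±1`. -/
lemma norm_integral_aux (a b c ε : ℝ) (ha : 0 ≤ a) (hab : a < b) (hc : 0 ≤ c)
    (hε : |ε| = 1) :
    (∫ x : ℝ, ‖(c : ℂ) * (cchi (Icc a b) x + (ε : ℂ) * cchi (Icc (-b) (-a)) x)‖ ^ 2)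
      = 2 * (b - a) * c ^ 2 := by
  have hae : ∀ᵐ x : ℝ ∂volume, x ∉ ({0} : Set ℝ) :=
    measure_eq_zero_iff_ae_notMem.mp (measure_singleton 0)
  have heq : (fun x : ℝ =>
        ‖(c : ℂ) * (cchi (Icc a b) x + (ε : ℂ) * cchi (Icc (-b) (-a)) x)‖ ^ 2)
      =ᵐ[volume] fun x => (Icc a b).indicator (fun _ => c ^ 2) x
        + (Icc (-b) (-a)).indicator (fun _ => c ^ 2) x := by
    filter_upwards [hae] with x hx
    simp only [mem_singleton_iff] at hx
    by_cases h1 : x ∈ Icc a b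
    · have h2 : x ∉ Icc (-b) (-a) := by
        intro h2
        rw [mem_Icc] at h1 h2
        exact hx (le_antisymm (by linarith [h2.2]) (by linarith [h1.1]))
      rw [cchi_mem h1, cchi_not_mem h2, indicator_of_mem h1, indicator_of_notMem h2]
      simp [Complex.norm_real, Real.norm_eq_abs, abs_of_nonneg hc]
    · rw [cchi_not_mem h1, indicator_of_notMem h1]
      by_cases h2 : x ∈ Icc (-b) (-a)
      · rw [cchi_mem h2, indicator_of_mem h2]
        simp only [mul_one, zero_add, norm_mul, Complex.norm_real, Real.norm_eq_abs,
          abs_of_nonneg hc, hε]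
        try ring
      · rw [cchi_not_mem h2, indicator_of_notMem h2]
        simp
  have hiA : Integrable ((Icc a b).indicator fun _ => c ^ 2) volume :=
    (integrable_indicator_iff measurableSet_Icc).2
      (integrableOn_const measure_Icc_lt_top.ne)
  have hiB : Integrable ((Icc (-b) (-a)).indicator fun _ => c ^ 2) volume :=
    (integrable_indicator_iff measurableSet_Icc).2
      (integrableOn_const measure_Icc_lt_top.ne)
  rw [integral_congr_ae heq, integral_add hiA hiB,
    integral_indicator_const _ measurableSet_Icc,
    integral_indicator_const _ measurableSet_Icc,
    measureReal_def, measureReal_def, Real.volume_Icc, Real.volume_Icc,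
    ENNReal.toReal_ofReal (by linarith), ENNReal.toReal_ofReal (by linarith)]
  simp only [smul_eq_mul]
  ring

/-- The autocorrelation at the point `a + b`, parametric in the sign `ε = ±1`. -/
lemma conv_val_aux (a b c ε : ℝ) (ha : 0 ≤ a) (hab : a < b) :
    (∫ y : ℝ, ((c : ℂ) * (cchi (Icc a b) y + (ε : ℂ) * cchi (Icc (-b) (-a)) y)) *
      ((c : ℂ) * (cchi (Icc a b) (y - (a + b)) +
        (ε : ℂ) * cchi (Icc (-b) (-a)) (y - (a + b)))))
      = ((ε * (c ^ 2 * (b - a)) : ℝ) : ℂ) := by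
  have hb : 0 < b := lt_of_le_of_lt ha hab
  have h0 : volume ({0, b} : Set ℝ) = 0 :=
    ((Set.finite_singleton b).insert 0).measure_zero volume
  have hae : ∀ᵐ y : ℝ ∂volume, y ∉ ({0, b} : Set ℝ) := measure_eq_zero_iff_ae_notMem.mp h0
  have heq : (fun y : ℝ =>
        ((c : ℂ) * (cchi (Icc a b) y + (ε : ℂ) * cchi (Icc (-b) (-a)) y)) *
          ((c : ℂ) * (cchi (Icc a b) (y - (a + b)) +
            (ε : ℂ) * cchi (Icc (-b) (-a)) (y - (a + b)))))
      =ᵐ[volume] fun y => (Icc a b).indicator (fun _ => ((ε * c ^ 2 : ℝ) : ℂ)) y := by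
    filter_upwards [hae] with y hy
    simp only [mem_insert_iff, mem_singleton_iff, not_or] at hy
    obtain ⟨hy0, hyb⟩ := hy
    have hv2 : cchi (Icc (-b) (-a)) (y - (a + b)) = cchi (Icc a b) y := by
      by_cases h : y ∈ Icc a b
      · rw [mem_Icc] at h
        rw [cchi_mem (by rw [mem_Icc]; constructor <;> linarith), cchi_mem (by rw [mem_Icc]; exact h)]
      · rw [mem_Icc] at h
        rw [cchi_not_mem, cchi_not_mem]
        · rw [mem_Icc]; exact h
        · rw [mem_Icc]; rintro ⟨h1', h2'⟩; exact h ⟨by linarith, by linarith⟩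
    rw [hv2]
    by_cases hA : y ∈ Icc a b
    · have hA' := mem_Icc.mp hA
      have hB : y ∉ Icc (-b) (-a) := by
        rw [mem_Icc]; rintro ⟨h1', h2'⟩
        have ha0 : a = 0 := le_antisymm (by linarith [hA'.1]) ha
        exact hy0 (le_antisymm (by linarith) (by linarith [hA'.1]))
      have hV : y - (a + b) ∉ Icc a b := by
        rw [mem_Icc]; rintro ⟨h1', h2'⟩
        have ha0 : a = 0 := le_antisymm (by linarith [hA'.2]) ha
        exact hyb (le_antisymm hA'.2 (by linarith))
      rw [cchi_mem hA, cchi_not_mem hB, cchi_not_mem hV, indicator_of_mem hA]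
      push_cast
      ring
    · rw [cchi_not_mem hA, indicator_of_notMem hA]
      by_cases hB : y ∈ Icc (-b) (-a)
      · have hB' := mem_Icc.mp hB
        have hV : y - (a + b) ∉ Icc a b := by
          rw [mem_Icc]; rintro ⟨h1', h2'⟩; linarith [hB'.2]
        rw [cchi_mem hB, cchi_not_mem hV]
        ring
      · rw [cchi_not_mem hB]
        ring
  rw [integral_congr_ae heq, integral_indicator_const _ measurableSet_Icc,
    measureReal_def, Real.volume_Icc, ENNReal.toReal_ofReal (by linarith)]
  rw [Complex.real_smul]
  push_cast
  ring

/-- For `0 ≤ a < b`, the functions `h₁ = (χ_{[a,b]} - χ_{[-b,-a]})/√(2(b-a))` and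
`h₂ = (χ_{[a,b]} + χ_{[-b,-a]})/√(2(b-a))` are unit vectors in `L²(ℝ)`, the
autocorrelations `h₁ ∗ h₁*` and `h₂ ∗ h₂*` agree outside `[2a,2b] ∪ [-2b,-2a]` but
differ at some point of `[2a,2b]`. -/
theorem stmt_8 (a b : ℝ) (ha : 0 ≤ a) (hab : a < b)
    (h₁ h₂ : ℝ → ℂ)
    (hh₁ : h₁ = fun ξ => (1 / Real.sqrt (2 * (b - a)) : ℝ) *
      (cchi (Set.Icc a b) ξ - cchi (Set.Icc (-b) (-a)) ξ))
    (hh₂ : h₂ = fun ξ => (1 / Real.sqrt (2 * (b - a)) : ℝ) *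
      (cchi (Set.Icc a b) ξ + cchi (Set.Icc (-b) (-a)) ξ)) :
    (∫ x : ℝ, ‖h₁ x‖ ^ 2) = 1 ∧ (∫ x : ℝ, ‖h₂ x‖ ^ 2) = 1 ∧
    (∀ x : ℝ, x ∉ Set.Icc (2 * a) (2 * b) ∪ Set.Icc (-(2 * b)) (-(2 * a)) →
      cconv h₁ (cstar h₁) x = cconv h₂ (cstar h₂) x) ∧
    (∃ x ∈ Set.Icc (2 * a) (2 * b), cconv h₁ (cstar h₁) x ≠ cconv h₂ (cstar h₂) x) := by
  subst hh₁ hh₂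
  have hba : (0:ℝ) < 2 * (b - a) := by linarith
  set c : ℝ := 1 / Real.sqrt (2 * (b - a)) with hc_def
  have hs2 : Real.sqrt (2 * (b - a)) ^ 2 = 2 * (b - a) := Real.sq_sqrt (le_of_lt hba)
  have hspos : 0 < Real.sqrt (2 * (b - a)) := Real.sqrt_pos.2 hba
  have hc : 0 ≤ c := by positivity
  have hc2 : 2 * (b - a) * c ^ 2 = 1 := by
    rw [hc_def, div_pow, one_pow, hs2]
    field_simp
    exact div_self (sub_ne_zero.2 (ne_of_gt hab))
  -- rewrite h₁, h₂ in the ε-form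
  have e1 : ∀ x : ℝ, (c : ℂ) * (cchi (Icc a b) x - cchi (Icc (-b) (-a)) x)
      = (c : ℂ) * (cchi (Icc a b) x + (((-1 : ℝ)) : ℂ) * cchi (Icc (-b) (-a)) x) := by
    intro x; push_cast; ring
  have e2 : ∀ x : ℝ, (c : ℂ) * (cchi (Icc a b) x + cchi (Icc (-b) (-a)) x)
      = (c : ℂ) * (cchi (Icc a b) x + (((1 : ℝ)) : ℂ) * cchi (Icc (-b) (-a)) x) := by
    intro x; push_cast; ring
  refine ⟨?_, ?_, ?_, ?_⟩
  · calc (∫ x : ℝ, ‖(c : ℂ) * (cchi (Icc a b) x - cchi (Icc (-b) (-a)) x)‖ ^ 2)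
        = ∫ x : ℝ, ‖(c : ℂ) * (cchi (Icc a b) x +
            (((-1 : ℝ)) : ℂ) * cchi (Icc (-b) (-a)) x)‖ ^ 2 := by
          simp only [e1]
      _ = 2 * (b - a) * c ^ 2 :=
          norm_integral_aux a b c (-1) ha hab hc (by norm_num)
      _ = 1 := hc2
  · calc (∫ x : ℝ, ‖(c : ℂ) * (cchi (Icc a b) x + cchi (Icc (-b) (-a)) x)‖ ^ 2)
        = ∫ x : ℝ, ‖(c : ℂ) * (cchi (Icc a b) x +
            (((1 : ℝ)) : ℂ) * cchi (Icc (-b) (-a)) x)‖ ^ 2 := by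
          simp only [e2]
      _ = 2 * (b - a) * c ^ 2 :=
          norm_integral_aux a b c 1 ha hab hc (by norm_num)
      _ = 1 := hc2
  · -- agreement outside [2a,2b] ∪ [-2b,-2a]
    intro x hx
    simp only [Set.mem_union, Set.mem_Icc, not_or] at hx
    push_neg at hx
    obtain ⟨hx1, hx2⟩ := hx
    have key : (fun y : ℝ => ((c : ℂ) * (cchi (Icc a b) y - cchi (Icc (-b) (-a)) y)) *
          cstar (fun ξ => (c : ℂ) * (cchi (Icc a b) ξ - cchi (Icc (-b) (-a)) ξ)) (x - y))
        = fun y : ℝ => ((c : ℂ) * (cchi (Icc a b) y + cchi (Icc (-b) (-a)) y)) *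
          cstar (fun ξ => (c : ℂ) * (cchi (Icc a b) ξ + cchi (Icc (-b) (-a)) ξ)) (x - y) := by
      funext y
      have hu1v2 : cchi (Icc a b) y * cchi (Icc (-b) (-a)) (y - x) = 0 := by
        by_cases hA : y ∈ Icc a b
        · have hA' := mem_Icc.mp hA
          have h2 : y - x ∉ Icc (-b) (-a) := by
            rw [mem_Icc]; rintro ⟨h1', h2'⟩
            have h2a : 2 * a ≤ x := by linarith [hA'.1]
            have := hx1 h2a
            linarith [hA'.2]
          rw [cchi_not_mem h2, mul_zero]
        · rw [cchi_not_mem hA, zero_mul]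
      have hu2v1 : cchi (Icc (-b) (-a)) y * cchi (Icc a b) (y - x) = 0 := by
        by_cases hB : y ∈ Icc (-b) (-a)
        · have hB' := mem_Icc.mp hB
          have h2 : y - x ∉ Icc a b := by
            rw [mem_Icc]; rintro ⟨h1', h2'⟩
            have h2a : -(2 * b) ≤ x := by linarith [hB'.2]
            have := hx2 h2a
            linarith [hB'.1]
          rw [cchi_not_mem h2, mul_zero]
        · rw [cchi_not_mem hB, zero_mul]
      simp only [cstar, neg_sub, map_mul, map_sub, map_add, Complex.conj_ofReal, cchi_conj]
      linear_combination (-2 * (c:ℂ)^2) * hu1v2 + (-2 * (c:ℂ)^2) * hu2v1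
    simp only [cconv, key]
  · -- difference at x = a + b
    refine ⟨a + b, by rw [mem_Icc]; constructor <;> linarith, ?_⟩
    have hrw : ∀ (ε : ℝ),
        cconv (fun ξ => (c : ℂ) * (cchi (Icc a b) ξ + (ε : ℂ) * cchi (Icc (-b) (-a)) ξ))
          (cstar fun ξ => (c : ℂ) * (cchi (Icc a b) ξ + (ε : ℂ) * cchi (Icc (-b) (-a)) ξ))
          (a + b) = ((ε * (c ^ 2 * (b - a)) : ℝ) : ℂ) := by
      intro ε
      rw [← conv_val_aux a b c ε ha hab]
      unfold cconv cstar
      congr 1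
      funext y
      have : -(a + b - y) = y - (a + b) := by ring
      rw [this]
      simp only [map_mul, map_add, Complex.conj_ofReal, cchi_conj]
    have hval1 : cconv (fun ξ => (c : ℂ) * (cchi (Icc a b) ξ - cchi (Icc (-b) (-a)) ξ))
        (cstar fun ξ => (c : ℂ) * (cchi (Icc a b) ξ - cchi (Icc (-b) (-a)) ξ)) (a + b)
        = (((-1 : ℝ) * (c ^ 2 * (b - a)) : ℝ) : ℂ) := by
      rw [← hrw (-1)]
      unfold cconv
      congr 1
      funext y
      simp only [e1]
    have hval2 : cconv (fun ξ => (c : ℂ) * (cchi (Icc a b) ξ + cchi (Icc (-b) (-a)) ξ))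
        (cstar fun ξ => (c : ℂ) * (cchi (Icc a b) ξ + cchi (Icc (-b) (-a)) ξ)) (a + b)
        = (((1 : ℝ) * (c ^ 2 * (b - a)) : ℝ) : ℂ) := by
      rw [← hrw 1]
      unfold cconv
      congr 1
      funext y
      simp only [e2]
    rw [hval1, hval2]
    intro hcontra
    rw [Complex.ofReal_inj] at hcontra
    have hcpos : 0 < c := by rw [hc_def]; exact div_pos one_pos hspos
    have hpos : 0 < c ^ 2 * (b - a) := mul_pos (pow_pos hcpos 2) (by linarith)
    nlinarith
end
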